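/- Let μ : [0,∞) → [0,∞) be Lebesgue integrable, let g₀ ≥ 0 be a real number, let (aₙ)_{n≥0} be nonnegative real numbers, and let (gₙ)_{n≥1} be a sequence of nonnegative continuous functions on [0,∞) such that g₁(t) ≤ a₀ + g₀·∫₀ᵗ μ(t') dt' for all t ≥ 0, and g_{n+1}(t) ≤ aₙ + ∫₀ᵗ μ(t')·gₙ(t') dt' for all t ≥ 0 and all n ≥ 1. Then for every n ≥ 0, sup_{t ∈ [0,∞)} g_{n+1}(t) ≤ Σ_{k=0}^{n} aₙ₋ₖ·‖μ‖₁ᵏ / k! + g₀·‖μ‖₁^{n+1} / (n+1)!. -/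

import Mathlib

open MeasureTheory

theorem key_eq (μ : ℝ → ℝ) (hμ_int : IntegrableOn μ (Set.Ici 0))
    (hμ_nonneg : ∀ t, 0 ≤ t → 0 ≤ μ t) :
    ∀ k : ℕ, ∀ t : ℝ, 0 ≤ t →
      (∫ s in Set.Ioc 0 t, μ s * (∫ u in Set.Ioc 0 s, μ u) ^ k)
        = (∫ u in Set.Ioc 0 t, μ u) ^ (k + 1) / ((k : ℝ) + 1) := by
  set F : ℝ → ℝ := fun s => ∫ u in Set.Ioc 0 s, μ u with hF
  have hsub : ∀ s : ℝ, Set.Ioc (0:ℝ) s ⊆ Set.Ici 0 := fun s x hx => hx.1.le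
  have hint' : ∀ s : ℝ, IntegrableOn μ (Set.Ioc 0 s) := fun s => hμ_int.mono_set (hsub s)
  have hae : ∀ s : ℝ, 0 ≤ᵐ[volume.restrict (Set.Ioc (0:ℝ) s)] μ := by
    intro s
    exact (ae_restrict_iff' measurableSet_Ioc).2 (Filter.Eventually.of_forall
      fun x hx => hμ_nonneg x hx.1.le)
  have hFmono : Monotone F := by
    intro s t hst
    exact setIntegral_mono_set (hint' t) (hae t)
      (HasSubset.Subset.eventuallyLE (Set.Ioc_subset_Ioc_right hst))
  have hFnonneg : ∀ s, 0 ≤ F s := fun s =>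
    setIntegral_nonneg measurableSet_Ioc fun x hx => hμ_nonneg x hx.1.le
  set M : ℝ := ∫ u in Set.Ici (0:ℝ), μ u with hM
  have hFle : ∀ s, F s ≤ M := by
    intro s
    exact setIntegral_mono_set hμ_int
      ((ae_restrict_iff' measurableSet_Ici).2 (Filter.Eventually.of_forall
        fun x hx => hμ_nonneg x hx))
      (HasSubset.Subset.eventuallyLE (hsub s))
  have hFmeas : Measurable F := hFmono.measurable
  have intA : ∀ (k : ℕ) (t : ℝ), IntegrableOn (fun s => μ s * F s ^ k) (Set.Ioc 0 t) := by
    intro k t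
    have := (hint' t).bdd_mul ((hFmeas.pow_const k).aestronglyMeasurable)
      (c := M ^ k) (Filter.Eventually.of_forall fun x => by
        rw [Real.norm_eq_abs, abs_of_nonneg (pow_nonneg (hFnonneg x) k)]
        exact pow_le_pow_left₀ (hFnonneg x) (hFle x) k)
    exact this.congr (Filter.Eventually.of_forall fun x => mul_comm _ _)
  intro k
  induction k with
  | zero => intro t ht; simp
  | succ k ih =>
    intro t ht
    set A := Set.Ioc (0:ℝ) t with hA
    set f : ℝ → ℝ → ℝ := fun s u => if s < u then (μ s * F s ^ k) * μ u else 0 with hf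
    -- inner integral in u
    have inner_u : ∀ s ∈ A, (∫ u in A, f s u) = (μ s * F s ^ k) * (F t - F s) := by
      intro s hs
      have h1 : (fun u => f s u)
          = Set.indicator (Set.Ioi s) (fun u => (μ s * F s ^ k) * μ u) := by
        funext u
        simp [hf, Set.indicator_apply, Set.mem_Ioi]
      rw [h1, setIntegral_indicator measurableSet_Ioi]
      have h2 : A ∩ Set.Ioi s = Set.Ioc s t := by
        rw [hA, Set.Ioc_inter_Ioi, max_eq_right hs.1.le]
      rw [h2, integral_const_mul]
      have h3 : F t = F s + ∫ u in Set.Ioc s t, μ u := by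
        rw [hF]
        rw [← setIntegral_union (Set.Ioc_disjoint_Ioc_of_le le_rfl) measurableSet_Ioc
          (hint' s) ((hint' t).mono_set (Set.Ioc_subset_Ioc_left hs.1.le)),
          Set.Ioc_union_Ioc_eq_Ioc hs.1.le hs.2]
      rw [h3]; ring
    -- inner integral in s
    have inner_s : ∀ u ∈ A, (∫ s in A, f s u) = μ u * (F u ^ (k + 1) / ((k : ℝ) + 1)) := by
      intro u hu
      have h1 : (fun s => f s u)
          = Set.indicator (Set.Iio u) (fun s => (μ s * F s ^ k) * μ u) := by
        funext s
        simp [hf, Set.indicator_apply, Set.mem_Iio]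
      rw [h1, setIntegral_indicator measurableSet_Iio]
      have h2 : A ∩ Set.Iio u = Set.Ioo 0 u := by
        ext x
        constructor
        · rintro ⟨⟨hx1, _⟩, hx3⟩; exact ⟨hx1, hx3⟩
        · rintro ⟨hx1, hx3⟩; exact ⟨⟨hx1, hx3.le.trans hu.2⟩, hx3⟩
      rw [h2, integral_mul_const, ← integral_Ioc_eq_integral_Ioo, ih u hu.1.le]
      ring
    -- Fubini
    have hfint : Integrable (Function.uncurry f)
        ((volume.restrict A).prod (volume.restrict A)) := by
      have hbase : Integrable (fun p : ℝ × ℝ => (μ p.1 * F p.1 ^ k) * μ p.2)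
          ((volume.restrict A).prod (volume.restrict A)) :=
        Integrable.mul_prod (intA k t) (hint' t)
      have hmeasset : MeasurableSet {p : ℝ × ℝ | p.1 < p.2} :=
        measurableSet_lt measurable_fst measurable_snd
      have : Function.uncurry f
          = Set.indicator {p : ℝ × ℝ | p.1 < p.2}
              (fun p => (μ p.1 * F p.1 ^ k) * μ p.2) := by
        funext p
        simp [Function.uncurry, hf, Set.indicator_apply]
      rw [this]
      exact hbase.indicator hmeasset
    have swap : (∫ s in A, ∫ u in A, f s u) = ∫ u in A, ∫ s in A, f s u :=
      integral_integral_swap hfint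
    have lhs_eq : (∫ s in A, ∫ u in A, f s u)
        = F t * (∫ s in A, μ s * F s ^ k) - ∫ s in A, μ s * F s ^ (k + 1) := by
      rw [setIntegral_congr_fun measurableSet_Ioc inner_u]
      have : ∀ s : ℝ, (μ s * F s ^ k) * (F t - F s)
          = F t * (μ s * F s ^ k) - μ s * F s ^ (k + 1) := by
        intro s; ring
      simp only [this]
      rw [integral_sub ((intA k t).const_mul (F t)) (intA (k+1) t), integral_const_mul]
    have rhs_eq : (∫ u in A, ∫ s in A, f s u)
        = (1 / ((k : ℝ) + 1)) * ∫ u in A, μ u * F u ^ (k + 1) := by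
      rw [setIntegral_congr_fun measurableSet_Ioc inner_s]
      have : ∀ u : ℝ, μ u * (F u ^ (k + 1) / ((k : ℝ) + 1))
          = (1 / ((k : ℝ) + 1)) * (μ u * F u ^ (k + 1)) := by
        intro u; ring
      simp only [this]
      rw [integral_const_mul]
    have hJk : (∫ s in A, μ s * F s ^ k) = F t ^ (k + 1) / ((k : ℝ) + 1) := ih t ht
    set J : ℝ := ∫ s in A, μ s * F s ^ (k + 1) with hJ
    have heq : F t * (F t ^ (k + 1) / ((k : ℝ) + 1)) - J = (1 / ((k : ℝ) + 1)) * J := by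
      rw [← hJk, ← lhs_eq, swap, rhs_eq]
    have hK : ((k : ℝ) + 1) ≠ 0 := by positivity
    have hK2 : ((k : ℝ) + 1 + 1) ≠ 0 := by positivity
    have hFA : (∫ u in A, μ u) = F t := rfl
    rw [hFA]
    push_cast
    show J = F t ^ (k + 1 + 1) / ((k : ℝ) + 1 + 1)
    have hpow : F t * F t ^ (k + 1) = F t ^ (k + 1 + 1) := by ring
    field_simp at heq ⊢
    nlinarith [heq]

/-- Lemma 3.1 (iterative integral inequality). -/
theorem stmt_0 (μ : ℝ → ℝ) (hμ_int : IntegrableOn μ (Set.Ici 0))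
    (hμ_nonneg : ∀ t, 0 ≤ t → 0 ≤ μ t)
    (g₀ : ℝ) (hg₀ : 0 ≤ g₀)
    (a : ℕ → ℝ) (ha : ∀ n, 0 ≤ a n)
    (g : ℕ → ℝ → ℝ)
    (hg_nonneg : ∀ n, 1 ≤ n → ∀ t, 0 ≤ t → 0 ≤ g n t)
    (hg_cont : ∀ n, 1 ≤ n → ContinuousOn (g n) (Set.Ici 0))
    (h1 : ∀ t, 0 ≤ t → g 1 t ≤ a 0 + g₀ * ∫ t' in Set.Ioc 0 t, μ t')
    (hrec : ∀ n, 1 ≤ n → ∀ t, 0 ≤ t →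
      g (n + 1) t ≤ a n + ∫ t' in Set.Ioc 0 t, μ t' * g n t') :
    ∀ n : ℕ, ∀ t, 0 ≤ t →
      g (n + 1) t ≤
        (∑ k ∈ Finset.range (n + 1),
          a (n - k) * (∫ t' in Set.Ici (0:ℝ), μ t') ^ k / Nat.factorial k) +
        g₀ * (∫ t' in Set.Ici (0:ℝ), μ t') ^ (n + 1) / Nat.factorial (n + 1) := by
  set F : ℝ → ℝ := fun s => ∫ u in Set.Ioc 0 s, μ u with hF
  set M : ℝ := ∫ u in Set.Ici (0:ℝ), μ u with hM
  have hsub : ∀ s : ℝ, Set.Ioc (0:ℝ) s ⊆ Set.Ici 0 := fun s x hx => hx.1.le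
  have hint' : ∀ s : ℝ, IntegrableOn μ (Set.Ioc 0 s) := fun s => hμ_int.mono_set (hsub s)
  have hFmono : Monotone F := by
    intro s t hst
    refine setIntegral_mono_set (hint' t) ?_
      (HasSubset.Subset.eventuallyLE (Set.Ioc_subset_Ioc_right hst))
    exact (ae_restrict_iff' measurableSet_Ioc).2 (Filter.Eventually.of_forall
      fun x hx => hμ_nonneg x hx.1.le)
  have hFnonneg : ∀ s, 0 ≤ F s := fun s =>
    setIntegral_nonneg measurableSet_Ioc fun x hx => hμ_nonneg x hx.1.le
  have hFle : ∀ s, F s ≤ M := by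
    intro s
    exact setIntegral_mono_set hμ_int
      ((ae_restrict_iff' measurableSet_Ici).2 (Filter.Eventually.of_forall
        fun x hx => hμ_nonneg x hx))
      (HasSubset.Subset.eventuallyLE (hsub s))
  have hFmeas : Measurable F := hFmono.measurable
  have intA : ∀ (k : ℕ) (t : ℝ), IntegrableOn (fun s => μ s * F s ^ k) (Set.Ioc 0 t) := by
    intro k t
    have := (hint' t).bdd_mul ((hFmeas.pow_const k).aestronglyMeasurable)
      (c := M ^ k) (Filter.Eventually.of_forall fun x => by
        rw [Real.norm_eq_abs, abs_of_nonneg (pow_nonneg (hFnonneg x) k)]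
        exact pow_le_pow_left₀ (hFnonneg x) (hFle x) k)
    exact this.congr (Filter.Eventually.of_forall fun x => mul_comm _ _)
  have hkey := key_eq μ hμ_int hμ_nonneg
  -- pointwise claim
  have claim : ∀ n : ℕ, ∀ t, 0 ≤ t →
      g (n + 1) t ≤
        (∑ k ∈ Finset.range (n + 1), a (n - k) * F t ^ k / Nat.factorial k) +
        g₀ * F t ^ (n + 1) / Nat.factorial (n + 1) := by
    intro n
    induction n with
    | zero =>
      intro t ht
      have := h1 t ht
      simpa [Finset.sum_range_one] using this
    | succ n ih =>
      intro t ht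
      have h2 := hrec (n + 1) (by omega) t ht
      set B : ℝ → ℝ := fun s =>
        (∑ k ∈ Finset.range (n + 1), a (n - k) * F s ^ k / Nat.factorial k) +
        g₀ * F s ^ (n + 1) / Nat.factorial (n + 1) with hB
      have hexpand : ∀ s : ℝ, μ s * B s =
          (∑ k ∈ Finset.range (n + 1),
            (a (n - k) / Nat.factorial k) * (μ s * F s ^ k)) +
          (g₀ / Nat.factorial (n + 1)) * (μ s * F s ^ (n + 1)) := by
        intro s
        rw [hB]
        simp only [Finset.mul_sum, Finset.sum_div, mul_add]
        congr 1
        · apply Finset.sum_congr rfl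
          intro k _
          ring
        · ring
      have hBint : IntegrableOn (fun s => μ s * B s) (Set.Ioc 0 t) := by
        refine IntegrableOn.congr_fun ?_ (fun s _ => (hexpand s).symm) measurableSet_Ioc
        apply Integrable.add
        · apply integrable_finset_sum
          intro k _
          exact (intA k t).const_mul _
        · exact (intA (n + 1) t).const_mul _
      have hmono : (∫ s in Set.Ioc 0 t, μ s * g (n + 1) s)
          ≤ ∫ s in Set.Ioc 0 t, μ s * B s := by
        apply integral_mono_of_nonneg
        · exact (ae_restrict_iff' measurableSet_Ioc).2 (Filter.Eventually.of_forall
            fun s hs => mul_nonneg (hμ_nonneg s hs.1.le)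
              (hg_nonneg (n + 1) (by omega) s hs.1.le))
        · exact hBint
        · exact (ae_restrict_iff' measurableSet_Ioc).2 (Filter.Eventually.of_forall
            fun s hs => mul_le_mul_of_nonneg_left (ih s hs.1.le) (hμ_nonneg s hs.1.le))
      have hBval : (∫ s in Set.Ioc 0 t, μ s * B s)
          = (∑ k ∈ Finset.range (n + 1),
              a (n - k) * F t ^ (k + 1) / Nat.factorial (k + 1)) +
            g₀ * F t ^ (n + 2) / Nat.factorial (n + 2) := by
        rw [setIntegral_congr_fun measurableSet_Ioc (fun s _ => hexpand s)]
        rw [integral_add (integrable_finset_sum _ fun k _ => (intA k t).const_mul _)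
          ((intA (n + 1) t).const_mul _)]
        rw [integral_finset_sum _ (fun k _ => (intA k t).const_mul _)]
        have hFt : (∫ u in Set.Ioc (0:ℝ) t, μ u) = F t := rfl
        congr 1
        · apply Finset.sum_congr rfl
          intro k _
          rw [integral_const_mul, hkey k t ht, hFt]
          have hfac : ((Nat.factorial (k + 1) : ℝ)) = ((k : ℝ) + 1) * Nat.factorial k := by
            rw [Nat.factorial_succ]; push_cast; ring
          rw [hfac, div_mul_div_comm, mul_comm ((k : ℝ) + 1)]
        · rw [integral_const_mul, hkey (n + 1) t ht, hFt]
          have hfac : ((Nat.factorial (n + 2) : ℝ)) = ((n : ℝ) + 1 + 1) * Nat.factorial (n + 1) := by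
            rw [show n + 2 = (n + 1) + 1 from rfl, Nat.factorial_succ]; push_cast; ring
          rw [hfac, div_mul_div_comm, mul_comm ((n : ℝ) + 1 + 1)]
          norm_num
      -- assemble
      have h3 : g (n + 2) t ≤ a (n + 1) +
          ((∑ k ∈ Finset.range (n + 1),
              a (n - k) * F t ^ (k + 1) / Nat.factorial (k + 1)) +
            g₀ * F t ^ (n + 2) / Nat.factorial (n + 2)) := by
        calc g (n + 2) t ≤ a (n + 1) + ∫ s in Set.Ioc 0 t, μ s * g (n + 1) s := h2
        _ ≤ a (n + 1) + ∫ s in Set.Ioc 0 t, μ s * B s := by linarith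
        _ = _ := by rw [hBval]
      have h4 : (∑ k ∈ Finset.range (n + 2),
            a (n + 1 - k) * F t ^ k / Nat.factorial k)
          = (∑ k ∈ Finset.range (n + 1),
              a (n - k) * F t ^ (k + 1) / Nat.factorial (k + 1)) + a (n + 1) := by
        rw [Finset.sum_range_succ']
        simp
      rw [h4]
      linarith
  intro n t ht
  refine (claim n t ht).trans ?_
  have hf1 : (0:ℝ) < Nat.factorial (n + 1) := by
    exact_mod_cast Nat.factorial_pos (n + 1)
  refine add_le_add (Finset.sum_le_sum fun k _ => ?_) ?_
  · gcongr <;> first | exact ha _ | exact hg₀ | exact hFnonneg t | exact hFle t | positivity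
  · gcongr <;> first | exact ha _ | exact hg₀ | exact hFnonneg t | exact hFle t | positivity
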